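/- Let Δ₁, Δ₂ > 0 with Δ₁ ≤ Δ₂ and let ζ ∈ ℂ with Im ζ > 0. Then |(e^{2iΔ₂ζ} − e^{2iΔ₁ζ}) / ((1 − e^{2iΔ₁ζ})(1 − e^{2iΔ₂ζ}))| ≤ 2 e^{−2Δ₁ Im ζ} / (1 − e^{−2Δ₁ Im ζ})² ≤ 2 / (e^{(Δ₁/2) Im ζ} − 1)². -/

import Mathlib

theorem stmt12 (Δ₁ Δ₂ : ℝ) (hΔ₁ : 0 < Δ₁) (hΔ : Δ₁ ≤ Δ₂) (ζ : ℂ) (hζ : 0 < ζ.im) :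
    ‖((Complex.exp (2 * Complex.I * Δ₂ * ζ) - Complex.exp (2 * Complex.I * Δ₁ * ζ)) /
        ((1 - Complex.exp (2 * Complex.I * Δ₁ * ζ)) *
          (1 - Complex.exp (2 * Complex.I * Δ₂ * ζ))))‖ ≤
      2 * Real.exp (-2 * Δ₁ * ζ.im) / (1 - Real.exp (-2 * Δ₁ * ζ.im)) ^ 2 ∧
    2 * Real.exp (-2 * Δ₁ * ζ.im) / (1 - Real.exp (-2 * Δ₁ * ζ.im)) ^ 2 ≤
      2 / (Real.exp (Δ₁ / 2 * ζ.im) - 1) ^ 2 := by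
  have hΔ₂ : 0 < Δ₂ := lt_of_lt_of_le hΔ₁ hΔ
  set E1 := Complex.exp (2 * Complex.I * Δ₁ * ζ) with hE1
  set E2 := Complex.exp (2 * Complex.I * Δ₂ * ζ) with hE2
  set r1 := Real.exp (-2 * Δ₁ * ζ.im) with hr1
  set r2 := Real.exp (-2 * Δ₂ * ζ.im) with hr2
  have habs1 : ‖E1‖ = r1 := by
    rw [hE1, Complex.norm_exp, hr1]
    congr 1
    simp [Complex.mul_re, Complex.mul_im]
  have habs2 : ‖E2‖ = r2 := by
    rw [hE2, Complex.norm_exp, hr2]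
    congr 1
    simp [Complex.mul_re, Complex.mul_im]
  have hr1pos : 0 < r1 := Real.exp_pos _
  have hr1lt : r1 < 1 := by
    rw [hr1]
    apply Real.exp_lt_one_iff.mpr
    nlinarith
  have hr21 : r2 ≤ r1 := by
    apply Real.exp_le_exp.mpr
    nlinarith
  have hd1 : 1 - r1 ≤ ‖1 - E1‖ := by
    have := norm_sub_norm_le (1:ℂ) E1
    simpa [habs1] using this
  have hd2 : 1 - r1 ≤ ‖1 - E2‖ := by
    have := norm_sub_norm_le (1:ℂ) E2
    simp only [habs2, norm_one] at this
    linarith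
  constructor
  · rw [norm_div, norm_mul]
    apply div_le_div₀ (by positivity)
    · calc ‖E2 - E1‖ ≤ ‖E2‖ + ‖E1‖ :=
            norm_sub_le E2 E1
        _ = r2 + r1 := by rw [habs1, habs2]
        _ ≤ 2 * r1 := by linarith
    · nlinarith
    · rw [sq]
      apply mul_le_mul hd1 hd2 (by linarith) (norm_nonneg _)
  · have hs : 0 < Δ₁ / 2 * ζ.im := by positivity
    set x := Real.exp (-(Δ₁ / 2 * ζ.im)) with hx
    have hx1 : x < 1 := Real.exp_lt_one_iff.mpr (by linarith)
    have hxpos : 0 < x := Real.exp_pos _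
    have hrx : r1 = x ^ 4 := by
      rw [hr1, hx, ← Real.exp_nat_mul]
      congr 1
      ring
    have hex : Real.exp (Δ₁ / 2 * ζ.im) = 1 / x := by
      rw [hx, Real.exp_neg, one_div, inv_inv]
    rw [hrx, hex]
    have h1x : (0:ℝ) < 1 / x - 1 := by
      have := one_lt_one_div hxpos hx1
      linarith
    rw [div_le_div_iff₀ (by nlinarith) (by positivity)]
    have key : x ^ 4 * (1/x - 1)^2 ≤ (1 - x^4)^2 := by
      have h : x ^ 4 * (1/x - 1)^2 = x^2 * (1-x)^2 := by
        field_simp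
      rw [h]
      nlinarith [sq_nonneg (1 - x), sq_nonneg x, sq_nonneg (x*(1-x)), sq_nonneg (1 - x^2)]
    nlinarith [key, sq_nonneg (1/x - 1)]
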